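/- arXiv:1807.10200 — 3 statements merged into one kernel-verified Lean document; each statement's English description precedes it below -/
import Mathlib

section
/- Let 𝒜 ⊆ ℕ be an OR₊ sequence, let t₁, t₂ ≥ 1 be integers, and let f, g : ℕ → ℝ≥0 satisfy f(n) = Θ(A(n)^{t₁}/n) and g(n) = Θ(A(n)^{t₂}/n) as n → ∞. Then ∑_{k=1}^{n−1} f(k)·g(n−k) = Θ(A(n)^{t₁+t₂}/n) as n → ∞. -/
open Filter Asymptotics MeasureTheory

/-- Counting function `A(x) = |𝒜 ∩ [0,x]|`. -/
noncomputable def cntA (A : Set ℕ) (x : ℝ) : ℕ :=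
  {n : ℕ | n ∈ A ∧ (n : ℝ) ≤ x}.ncard

/-- The increasing enumeration `a₀ < a₁ < ⋯` of a set `A ⊆ ℕ`. -/
noncomputable def seqA (A : Set ℕ) (n : ℕ) : ℕ := Nat.nth (· ∈ A) n

/-- `A` is an OR sequence: `A(2x) = O(A(x))`. -/
def ORseq (A : Set ℕ) : Prop :=
  (fun x : ℝ => (cntA A (2 * x) : ℝ)) =O[atTop] (fun x : ℝ => (cntA A x : ℝ))

/-- `A` is a PI sequence: `a_{2n} = O(a_n)`. -/
def PIseq (A : Set ℕ) : Prop :=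
  (fun n : ℕ => (seqA A (2 * n) : ℝ)) =O[atTop] (fun n : ℕ => (seqA A n : ℝ))

/-- `A` is an OR₊ sequence: an infinite subset of ℕ that is both OR and PI. -/
def ORplus (A : Set ℕ) : Prop := A.Infinite ∧ ORseq A ∧ PIseq A

lemma cntA_finite (A : Set ℕ) (x : ℝ) : {n : ℕ | n ∈ A ∧ (n : ℝ) ≤ x}.Finite := by
  apply (Set.finite_Iic ⌈x⌉₊).subset
  intro n hn
  have : (n : ℝ) ≤ ⌈x⌉₊ := hn.2.trans (Nat.le_ceil x)
  exact_mod_cast this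

lemma cntA_mono (A : Set ℕ) {x y : ℝ} (h : x ≤ y) : cntA A x ≤ cntA A y := by
  apply Set.ncard_le_ncard _ (cntA_finite A y)
  exact fun n hn => ⟨hn.1, hn.2.trans h⟩

lemma cntA_eq_count (A : Set ℕ) [DecidablePred (· ∈ A)] {x : ℝ} (hx : 0 ≤ x) :
    cntA A x = Nat.count (· ∈ A) (⌊x⌋₊ + 1) := by
  have : {n : ℕ | n ∈ A ∧ (n : ℝ) ≤ x}
      = ↑({m ∈ Finset.range (⌊x⌋₊ + 1) | m ∈ A}) := by
    ext n
    simp only [Set.mem_setOf_eq, Finset.coe_filter, Finset.mem_range, Nat.lt_succ_iff,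
      Set.mem_setOf_eq]
    rw [Nat.le_floor_iff hx]
    tauto
  rw [cntA, this, Set.ncard_coe_finset, Nat.count_eq_card_filter_range]

lemma nth_le_of_lt_cntA (A : Set ℕ) {x : ℝ} {m : ℕ} (h : m < cntA A x) :
    (Nat.nth (· ∈ A) m : ℝ) ≤ x := by
  classical
  have hx : 0 ≤ x := by
    by_contra hx
    push_neg at hx
    have : {n : ℕ | n ∈ A ∧ (n : ℝ) ≤ x} = ∅ := by
      ext n; simp only [Set.mem_setOf_eq, Set.mem_empty_iff_false, iff_false, not_and]
      intro _; linarith [Nat.cast_nonneg (α := ℝ) n]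
    rw [cntA, this] at h; simp at h
  rw [cntA_eq_count A hx] at h
  have := Nat.nth_lt_of_lt_count h
  have h2 : Nat.nth (· ∈ A) m ≤ ⌊x⌋₊ := by omega
  calc (Nat.nth (· ∈ A) m : ℝ) ≤ ⌊x⌋₊ := by exact_mod_cast h2
    _ ≤ x := Nat.floor_le hx

lemma infinite_setOf (A : Set ℕ) (hA : A.Infinite) : {n | (fun m => m ∈ A) n}.Infinite := by
  rwa [Set.setOf_mem_eq]

lemma cntA_nth (A : Set ℕ) (hA : A.Infinite) (m : ℕ) :
    cntA A (Nat.nth (· ∈ A) m : ℝ) = m + 1 := by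
  classical
  have hinf := infinite_setOf A hA
  rw [cntA_eq_count A (by positivity)]
  rw [Nat.floor_natCast]
  rw [Nat.count_succ, Nat.count_nth_of_infinite hinf]
  simp [Nat.nth_mem_of_infinite hinf]

lemma cntA_eventually (A : Set ℕ) (hA : A.Infinite) (M : ℕ) :
    ∀ᶠ x : ℝ in atTop, M ≤ cntA A x := by
  filter_upwards [eventually_ge_atTop ((Nat.nth (· ∈ A) M : ℝ))] with x hx
  have := cntA_nth A hA M
  have := cntA_mono A hx
  omega

lemma cntA_eventually_nat (A : Set ℕ) (hA : A.Infinite) (M : ℕ) :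
    ∀ᶠ n : ℕ in atTop, M ≤ cntA A n := by
  exact (tendsto_natCast_atTop_atTop (R := ℝ)).eventually (cntA_eventually A hA M)

lemma exOR (A : Set ℕ) (hOR : ORseq A) :
    ∃ C : ℝ, 1 ≤ C ∧ ∃ X : ℝ, 0 ≤ X ∧ ∀ x : ℝ, X ≤ x → (cntA A (2 * x) : ℝ) ≤ C * cntA A x := by
  obtain ⟨c, hc⟩ := hOR.bound
  rw [eventually_atTop] at hc
  obtain ⟨X, hX⟩ := hc
  refine ⟨max c 1, le_max_right _ _, max X 0, le_max_right _ _, fun x hx => ?_⟩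
  have h := hX x ((le_max_left _ _).trans hx)
  rw [Real.norm_natCast, Real.norm_natCast] at h
  calc (cntA A (2 * x) : ℝ) ≤ c * cntA A x := h
    _ ≤ max c 1 * cntA A x := by
        apply mul_le_mul_of_nonneg_right (le_max_left _ _) (Nat.cast_nonneg _)

lemma exPI (A : Set ℕ) (hA : A.Infinite) (hPI : PIseq A) :
    ∃ D : ℕ, 2 ≤ D ∧ ∃ M₀ : ℕ, ∀ m : ℕ, M₀ ≤ m →
      3 * cntA A m ≤ 2 * cntA A ((D * m : ℕ) : ℝ) := by
  obtain ⟨c, hc⟩ := hPI.bound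
  rw [eventually_atTop] at hc
  obtain ⟨N, hN⟩ := hc
  set D : ℕ := ⌈c⌉₊ + 2 with hD
  have hD2 : 2 ≤ D := by omega
  -- nth(2k) ≤ D * nth k for k ≥ N
  have key : ∀ k, N ≤ k → Nat.nth (· ∈ A) (2 * k) ≤ D * Nat.nth (· ∈ A) k := by
    intro k hk
    have h := hN k hk
    rw [Real.norm_natCast, Real.norm_natCast] at h
    have hcD : c ≤ (D : ℝ) := by
      calc c ≤ ⌈c⌉₊ := Nat.le_ceil c
        _ ≤ (D : ℝ) := by exact_mod_cast Nat.le_add_right _ _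
    have : (Nat.nth (· ∈ A) (2 * k) : ℝ) ≤ (D : ℝ) * Nat.nth (· ∈ A) k :=
      h.trans (mul_le_mul_of_nonneg_right hcD (Nat.cast_nonneg _))
    exact_mod_cast this
  -- choose M₀ so that cntA A m ≥ N + 2 for m ≥ M₀
  obtain ⟨M₀, hM₀⟩ := eventually_atTop.1 (cntA_eventually_nat A hA (N + 2))
  refine ⟨D, hD2, M₀, fun m hm => ?_⟩
  have hcnt : N + 2 ≤ cntA A m := hM₀ m hm
  set k : ℕ := cntA A m - 1 with hk
  have hk1 : k + 1 = cntA A m := by omega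
  have hkN : N ≤ k := by omega
  have h1 : (Nat.nth (· ∈ A) k : ℝ) ≤ m := nth_le_of_lt_cntA A (by omega)
  have h2 : (Nat.nth (· ∈ A) (2 * k) : ℝ) ≤ ((D * m : ℕ) : ℝ) := by
    have := key k hkN
    rw [Nat.cast_mul]
    calc (Nat.nth (· ∈ A) (2 * k) : ℝ) ≤ (D : ℝ) * Nat.nth (· ∈ A) k := by exact_mod_cast this
      _ ≤ (D : ℝ) * m := by
          apply mul_le_mul_of_nonneg_left h1 (Nat.cast_nonneg _)
  have h3 : 2 * k + 1 ≤ cntA A ((D * m : ℕ) : ℝ) := by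
    have := cntA_mono A h2
    rw [cntA_nth A hA (2 * k)] at this
    omega
  omega

lemma sum_pow_div_le (A : Set ℕ) (hA : A.Infinite) (hPI : PIseq A) (t : ℕ) (ht : 1 ≤ t) :
    ∃ K : ℝ, 0 < K ∧ ∀ᶠ n : ℕ in atTop,
      ∑ k ∈ Finset.Ioc 0 n, ((cntA A k : ℝ) ^ t / k) ≤ K * (cntA A n : ℝ) ^ t := by
  obtain ⟨D, hD, M₀, hM₀⟩ := exPI A hA hPI
  set S : ℕ → ℝ := fun n => ∑ k ∈ Finset.Ioc 0 n, ((cntA A k : ℝ) ^ t / k) with hS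
  have hSnonneg : ∀ n, 0 ≤ S n := fun n =>
    Finset.sum_nonneg fun k _ => by positivity
  set N₀ : ℕ := D * (M₀ + 1) with hN₀
  have main : ∀ n : ℕ, S n ≤ S N₀ + 3 * D * (cntA A n : ℝ) ^ t := by
    intro n
    induction n using Nat.strong_induction_on with
    | _ n ih =>
      rcases le_or_gt n N₀ with hn | hn
      · have h1 : S n ≤ S N₀ := by
          apply Finset.sum_le_sum_of_subset_of_nonneg (Finset.Ioc_subset_Ioc_right hn)
          intro k _ _; positivity
        have : (0:ℝ) ≤ 3 * D * (cntA A n : ℝ) ^ t := by positivity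
        linarith
      · set m : ℕ := n / D with hm
        have hmM : M₀ ≤ m := by
          have h4 : N₀ / D ≤ m := Nat.div_le_div_right hn.le
          rw [hN₀, Nat.mul_div_cancel_left _ (by omega)] at h4
          omega
        have hmn : m < n := Nat.div_lt_self (by omega) (by omega)
        have hsplit : S m + ∑ k ∈ Finset.Ioc m n, ((cntA A k : ℝ) ^ t / k) = S n :=
          Finset.sum_Ioc_consecutive _ (Nat.zero_le m) hmn.le
        have hDm : D * m ≤ n := by
          rw [hm, Nat.mul_comm]; exact Nat.div_mul_le_self n D
        have h3 : (3:ℝ) * cntA A m ≤ 2 * cntA A n := by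
          have h := hM₀ m hmM
          have h2 := cntA_mono A (show ((D * m : ℕ):ℝ) ≤ ((n:ℕ):ℝ) by exact_mod_cast hDm)
          have h5 : 3 * cntA A (m:ℝ) ≤ 2 * cntA A (n:ℝ) := by omega
          exact_mod_cast h5
        have hpow : (cntA A m : ℝ) ^ t ≤ (2/3) * (cntA A n : ℝ) ^ t := by
          have hle : (cntA A m : ℝ) ≤ (2/3) * cntA A n := by linarith
          calc (cntA A m : ℝ) ^ t ≤ ((2/3) * cntA A n) ^ t :=
                pow_le_pow_left₀ (Nat.cast_nonneg _) hle t
            _ = (2/3) ^ t * (cntA A n : ℝ) ^ t := mul_pow _ _ _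
            _ ≤ (2/3) * (cntA A n : ℝ) ^ t := by
                apply mul_le_mul_of_nonneg_right _ (by positivity)
                calc ((2:ℝ)/3) ^ t ≤ (2/3) ^ 1 :=
                      pow_le_pow_of_le_one (by norm_num) (by norm_num) ht
                  _ = 2/3 := pow_one _
        have hblock : ∑ k ∈ Finset.Ioc m n, ((cntA A k : ℝ) ^ t / k)
            ≤ D * (cntA A n : ℝ) ^ t := by
          have hb : ∀ k ∈ Finset.Ioc m n,
              (cntA A k : ℝ) ^ t / k ≤ (cntA A n : ℝ) ^ t / (m + 1) := by
            intro k hk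
            rw [Finset.mem_Ioc] at hk
            have h1 : (cntA A k : ℝ) ^ t ≤ (cntA A n : ℝ) ^ t := by
              apply pow_le_pow_left₀ (Nat.cast_nonneg _) _ t
              exact_mod_cast cntA_mono A (show ((k:ℕ):ℝ) ≤ ((n:ℕ):ℝ) by exact_mod_cast hk.2)
            apply div_le_div₀ (by positivity) h1 (by positivity)
            exact_mod_cast hk.1
          have hcard : ((n - m : ℕ) : ℝ) ≤ (D:ℝ) * (m + 1) := by
            have h6 : n < (m + 1) * D := by
              have : n / D < m + 1 := by omega
              exact (Nat.div_lt_iff_lt_mul (by omega)).1 this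
            have h7 : (n - m : ℕ) ≤ D * (m + 1) := by
              calc n - m ≤ n := Nat.sub_le _ _
                _ ≤ (m+1) * D := h6.le
                _ = D * (m+1) := Nat.mul_comm _ _
            exact_mod_cast h7
          calc ∑ k ∈ Finset.Ioc m n, ((cntA A k : ℝ) ^ t / k)
              ≤ (Finset.Ioc m n).card • ((cntA A n : ℝ) ^ t / (m + 1)) :=
                Finset.sum_le_card_nsmul _ _ _ hb
            _ = ((n - m : ℕ) : ℝ) * ((cntA A n : ℝ) ^ t / (m + 1)) := by
                rw [Nat.card_Ioc, nsmul_eq_mul]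
            _ ≤ ((D:ℝ) * (m + 1)) * ((cntA A n : ℝ) ^ t / (m + 1)) :=
                mul_le_mul_of_nonneg_right hcard (by positivity)
            _ = D * (cntA A n : ℝ) ^ t := by
                field_simp
        have hIH := ih m hmn
        have h8 : (3:ℝ) * D * (cntA A m : ℝ) ^ t ≤ 2 * D * (cntA A n : ℝ) ^ t := by
          have := mul_le_mul_of_nonneg_left hpow (show (0:ℝ) ≤ 3 * D by positivity)
          linarith
        linarith
  refine ⟨S N₀ + 3 * D, by positivity, ?_⟩
  filter_upwards [cntA_eventually_nat A hA 1] with n h1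
  have hp : (1:ℝ) ≤ (cntA A n : ℝ) ^ t := one_le_pow₀ (by exact_mod_cast h1)
  calc S n ≤ S N₀ + 3 * D * (cntA A n : ℝ) ^ t := main n
    _ ≤ S N₀ * (cntA A n : ℝ) ^ t + 3 * D * (cntA A n : ℝ) ^ t := by
        have := le_mul_of_one_le_right (hSnonneg N₀) hp
        linarith
    _ = (S N₀ + 3 * D) * (cntA A n : ℝ) ^ t := by ring

/-- extract an eventual pointwise bound from big-O -/
lemma bigO_bound {f : ℕ → ℝ} {h : ℕ → ℝ} (hO : f =O[atTop] h)
    (hf : ∀ n, 0 ≤ f n) (hh : ∀ n, 0 ≤ h n) :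
    ∃ C : ℝ, 0 < C ∧ ∃ N : ℕ, ∀ k, N ≤ k → f k ≤ C * h k := by
  obtain ⟨c, hc⟩ := hO.bound
  rw [eventually_atTop] at hc
  obtain ⟨N, hN⟩ := hc
  refine ⟨max c 1, by positivity, N, fun k hk => ?_⟩
  have h1 := hN k hk
  rw [Real.norm_of_nonneg (hf k), Real.norm_of_nonneg (hh k)] at h1
  exact h1.trans (mul_le_mul_of_nonneg_right (le_max_left _ _) (hh k))

lemma half_ub (A : Set ℕ) (hA : A.Infinite) (t₁ t₂ : ℕ) (ht₁ : 1 ≤ t₁)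
    (hsum : ∃ K : ℝ, 0 < K ∧ ∀ᶠ n : ℕ in atTop,
      ∑ k ∈ Finset.Ioc 0 n, ((cntA A k : ℝ) ^ t₁ / k) ≤ K * (cntA A n : ℝ) ^ t₁)
    (f g : ℕ → ℝ) (hf : ∀ n, 0 ≤ f n) (hg : ∀ n, 0 ≤ g n)
    (hfO : f =O[atTop] fun n : ℕ => (cntA A n : ℝ) ^ t₁ / n)
    (hgO : g =O[atTop] fun n : ℕ => (cntA A n : ℝ) ^ t₂ / n) :
    ∃ K : ℝ, 0 < K ∧ ∀ᶠ n : ℕ in atTop,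
      ∑ k ∈ Finset.Ioc 0 (n / 2), f k * g (n - k) ≤ K * ((cntA A n : ℝ) ^ (t₁ + t₂) / n) := by
  obtain ⟨K, hK, hKev⟩ := hsum
  obtain ⟨NK, hNK⟩ := eventually_atTop.1 hKev
  obtain ⟨Cf, hCf, Nf, hNf⟩ := bigO_bound hfO hf (fun n => by positivity)
  obtain ⟨Cg, hCg, Ng, hNg⟩ := bigO_bound hgO hg (fun n => by positivity)
  set Mf : ℝ := ∑ k ∈ Finset.Ioc 0 Nf, f k with hMf
  have hMf0 : 0 ≤ Mf := Finset.sum_nonneg fun k _ => hf k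
  refine ⟨2 * Cg * (Mf + Cf * K), by positivity, ?_⟩
  obtain ⟨N1, hN1⟩ := eventually_atTop.1 (cntA_eventually_nat A hA 1)
  rw [eventually_atTop]
  refine ⟨2 * Nf + 2 * Ng + 2 * NK + N1 + 4, fun n hn => ?_⟩
  have hn0 : 0 < n := by omega
  have h1 : 1 ≤ cntA A n := hN1 n (by omega)
  have h1R : (1:ℝ) ≤ (cntA A n : ℝ) := by exact_mod_cast h1
  -- bound on g(n-k) for k ≤ n/2
  have hgb : ∀ k ∈ Finset.Ioc 0 (n / 2),
      g (n - k) ≤ 2 * Cg * (cntA A n : ℝ) ^ t₂ / n := by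
    intro k hk
    rw [Finset.mem_Ioc] at hk
    have hkn : k ≤ n := le_trans hk.2 (Nat.div_le_self n 2)
    have hnk : Ng ≤ n - k := by omega
    have h2 := hNg (n - k) hnk
    have hnkpos : 0 < n - k := by omega
    have hcast : ((n - k : ℕ) : ℝ) = (n : ℝ) - k := by
      push_cast [hkn]; ring
    have hineq : (n : ℝ) / 2 ≤ ((n - k : ℕ) : ℝ) := by
      rw [hcast]
      have : (k : ℝ) ≤ (n : ℝ) / 2 := by
        have : (k : ℝ) ≤ ((n / 2 : ℕ) : ℝ) := by exact_mod_cast hk.2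
        have h3 : ((n / 2 : ℕ) : ℝ) ≤ (n : ℝ) / 2 := by
          rw [le_div_iff₀ (by norm_num)]
          exact_mod_cast Nat.div_mul_le_self n 2
        linarith
      linarith
    have hmono : (cntA A ((n - k : ℕ) : ℝ) : ℝ) ≤ (cntA A n : ℝ) := by
      exact_mod_cast cntA_mono A (show ((n - k : ℕ):ℝ) ≤ ((n:ℕ):ℝ) by exact_mod_cast Nat.sub_le n k)
    calc g (n - k) ≤ Cg * ((cntA A ((n-k:ℕ)) : ℝ) ^ t₂ / ((n-k:ℕ) : ℝ)) := h2
      _ ≤ Cg * ((cntA A n : ℝ) ^ t₂ / ((n : ℝ)/2)) := by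
          apply mul_le_mul_of_nonneg_left _ hCg.le
          exact div_le_div₀ (by positivity)
            (pow_le_pow_left₀ (Nat.cast_nonneg _) hmono t₂) (by positivity) hineq
      _ = 2 * Cg * (cntA A n : ℝ) ^ t₂ / n := by
          field_simp
  -- bound the f-sum
  have hcnth : (cntA A ((n/2 : ℕ) : ℝ) : ℝ) ≤ (cntA A n : ℝ) := by
    exact_mod_cast cntA_mono A
      (show (((n/2:ℕ)):ℝ) ≤ ((n:ℕ):ℝ) by exact_mod_cast Nat.div_le_self n 2)
  have hsumf : ∑ k ∈ Finset.Ioc 0 (n / 2), f k ≤ (Mf + Cf * K) * (cntA A n : ℝ) ^ t₁ := by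
    have hsplit : ∑ k ∈ Finset.Ioc 0 Nf, f k + ∑ k ∈ Finset.Ioc Nf (n / 2), f k
        = ∑ k ∈ Finset.Ioc 0 (n / 2), f k :=
      Finset.sum_Ioc_consecutive f (Nat.zero_le _) (by omega)
    have h2 : ∑ k ∈ Finset.Ioc Nf (n / 2), f k
        ≤ Cf * ∑ k ∈ Finset.Ioc 0 (n / 2), ((cntA A k : ℝ) ^ t₁ / k) := by
      calc ∑ k ∈ Finset.Ioc Nf (n / 2), f k
          ≤ ∑ k ∈ Finset.Ioc Nf (n / 2), Cf * ((cntA A k : ℝ) ^ t₁ / k) := by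
            apply Finset.sum_le_sum
            intro k hk
            rw [Finset.mem_Ioc] at hk
            exact hNf k hk.1.le
        _ = Cf * ∑ k ∈ Finset.Ioc Nf (n / 2), ((cntA A k : ℝ) ^ t₁ / k) :=
            (Finset.mul_sum _ _ _).symm
        _ ≤ Cf * ∑ k ∈ Finset.Ioc 0 (n / 2), ((cntA A k : ℝ) ^ t₁ / k) := by
            apply mul_le_mul_of_nonneg_left _ hCf.le
            apply Finset.sum_le_sum_of_subset_of_nonneg
              (Finset.Ioc_subset_Ioc_left (Nat.zero_le _))
            intro k _ _; positivity
    have h3 : ∑ k ∈ Finset.Ioc 0 (n / 2), ((cntA A k : ℝ) ^ t₁ / k)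
        ≤ K * (cntA A ((n/2 : ℕ)) : ℝ) ^ t₁ := hNK (n / 2) (by omega)
    have h4 : (cntA A ((n/2:ℕ)) : ℝ) ^ t₁ ≤ (cntA A n : ℝ) ^ t₁ :=
      pow_le_pow_left₀ (Nat.cast_nonneg _) hcnth t₁
    have h5 : (1:ℝ) ≤ (cntA A n : ℝ) ^ t₁ := one_le_pow₀ h1R
    have h6 : Mf ≤ Mf * (cntA A n : ℝ) ^ t₁ := le_mul_of_one_le_right hMf0 h5
    nlinarith [mul_le_mul_of_nonneg_left h4 (mul_pos hCf hK).le,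
      mul_le_mul_of_nonneg_left h3 hCf.le]
  calc ∑ k ∈ Finset.Ioc 0 (n / 2), f k * g (n - k)
      ≤ ∑ k ∈ Finset.Ioc 0 (n / 2), f k * (2 * Cg * (cntA A n : ℝ) ^ t₂ / n) :=
        Finset.sum_le_sum fun k hk => mul_le_mul_of_nonneg_left (hgb k hk) (hf k)
    _ = (∑ k ∈ Finset.Ioc 0 (n / 2), f k) * (2 * Cg * (cntA A n : ℝ) ^ t₂ / n) :=
        (Finset.sum_mul _ _ _).symm
    _ ≤ ((Mf + Cf * K) * (cntA A n : ℝ) ^ t₁) * (2 * Cg * (cntA A n : ℝ) ^ t₂ / n) := by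
        apply mul_le_mul_of_nonneg_right hsumf (by positivity)
    _ = 2 * Cg * (Mf + Cf * K) * ((cntA A n : ℝ) ^ (t₁ + t₂) / n) := by
        rw [pow_add]; ring

lemma reflect_sum (F G : ℕ → ℝ) (hF : ∀ k, 0 ≤ F k) (hG : ∀ k, 0 ≤ G k) (n : ℕ) :
    ∑ k ∈ Finset.Ioc (n / 2) (n - 1), F k * G (n - k)
      ≤ ∑ j ∈ Finset.Ioc 0 (n / 2), G j * F (n - j) := by
  have hinj : ∀ x ∈ Finset.Ioc (n / 2) (n - 1), ∀ y ∈ Finset.Ioc (n / 2) (n - 1),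
      n - x = n - y → x = y := by
    intro x hx y hy h
    rw [Finset.mem_Ioc] at hx hy
    omega
  have heq : ∑ k ∈ Finset.Ioc (n / 2) (n - 1), F k * G (n - k)
      = ∑ j ∈ (Finset.Ioc (n / 2) (n - 1)).image (fun k => n - k), G j * F (n - j) := by
    rw [Finset.sum_image hinj]
    apply Finset.sum_congr rfl
    intro k hk
    rw [Finset.mem_Ioc] at hk
    have : n - (n - k) = k := by omega
    rw [this, mul_comm]
  rw [heq]
  apply Finset.sum_le_sum_of_subset_of_nonneg
  · intro j hj
    rw [Finset.mem_image] at hj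
    obtain ⟨k, hk, rfl⟩ := hj
    rw [Finset.mem_Ioc] at hk
    rw [Finset.mem_Ioc]
    omega
  · intro j _ _
    exact mul_nonneg (hG j) (hF _)

lemma lb (A : Set ℕ) (t₁ t₂ : ℕ)
    (hOR : ∃ C : ℝ, 1 ≤ C ∧ ∃ X : ℝ, 0 ≤ X ∧
      ∀ x : ℝ, X ≤ x → (cntA A (2 * x) : ℝ) ≤ C * cntA A x)
    (f g : ℕ → ℝ) (hf : ∀ n, 0 ≤ f n) (hg : ∀ n, 0 ≤ g n)
    (hfO : (fun n : ℕ => (cntA A n : ℝ) ^ t₁ / n) =O[atTop] f)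
    (hgO : (fun n : ℕ => (cntA A n : ℝ) ^ t₂ / n) =O[atTop] g) :
    ∃ c : ℝ, 0 < c ∧ ∀ᶠ n : ℕ in atTop,
      c * ((cntA A n : ℝ) ^ (t₁ + t₂) / n) ≤ ∑ k ∈ Finset.Ioo 0 n, f k * g (n - k) := by
  obtain ⟨C, hC, X, hX0, hORx⟩ := hOR
  obtain ⟨cf, hcf, Nf, hNf⟩ := bigO_bound hfO (fun n => by positivity) hf
  obtain ⟨cg, hcg, Ng, hNg⟩ := bigO_bound hgO (fun n => by positivity) hg
  have hCpos : (0:ℝ) < C := lt_of_lt_of_le one_pos hC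
  set X' : ℕ := ⌈X⌉₊ with hX'
  refine ⟨1 / (16 * cf * cg * C ^ (3 * t₁) * C ^ t₂), by positivity, ?_⟩
  rw [eventually_atTop]
  refine ⟨4 * Nf + 2 * Ng + 4 * X' + 4 + 16, fun n hn => ?_⟩
  have hn0 : 0 < n := by omega
  set m : ℕ := n / 4 with hm
  set q : ℕ := n - n / 2 with hq
  have hmX : X ≤ (m : ℝ) := by
    have h1 : X' ≤ m := by omega
    calc X ≤ (X' : ℝ) := Nat.le_ceil X
      _ ≤ (m : ℝ) := by exact_mod_cast h1
  -- chain for m = n/4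
  have hiA : (cntA A n : ℝ) ≤ C ^ 3 * cntA A m := by
    have s1 : (cntA A ((2 * m : ℕ) : ℝ) : ℝ) ≤ C * cntA A m := by
      have := hORx m hmX
      rw [show ((2 * m : ℕ) : ℝ) = 2 * (m : ℝ) by push_cast; ring]
      exact this
    have s2 : (cntA A ((4 * m : ℕ) : ℝ) : ℝ) ≤ C * cntA A ((2 * m : ℕ) : ℝ) := by
      have := hORx ((2 * m : ℕ) : ℝ) (hmX.trans (by exact_mod_cast Nat.le_mul_of_pos_left m (by norm_num)))
      rw [show ((4 * m : ℕ) : ℝ) = 2 * ((2 * m : ℕ) : ℝ) by push_cast; ring]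
      exact this
    have s3 : (cntA A ((8 * m : ℕ) : ℝ) : ℝ) ≤ C * cntA A ((4 * m : ℕ) : ℝ) := by
      have := hORx ((4 * m : ℕ) : ℝ) (hmX.trans (by exact_mod_cast Nat.le_mul_of_pos_left m (by norm_num)))
      rw [show ((8 * m : ℕ) : ℝ) = 2 * ((4 * m : ℕ) : ℝ) by push_cast; ring]
      exact this
    have s0 : (cntA A n : ℝ) ≤ (cntA A ((8 * m : ℕ) : ℝ) : ℝ) := by
      have h8 : n ≤ 8 * m := by omega
      exact_mod_cast cntA_mono A (show ((n:ℕ):ℝ) ≤ ((8*m:ℕ):ℝ) by exact_mod_cast h8)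
    have c1 : (cntA A ((4 * m : ℕ) : ℝ) : ℝ) ≥ 0 := Nat.cast_nonneg _
    nlinarith [mul_le_mul_of_nonneg_left s2 hCpos.le, mul_le_mul_of_nonneg_left s1 (by positivity : (0:ℝ) ≤ C * C)]
  -- chain for q = n - n/2
  have hiB : (cntA A n : ℝ) ≤ C * cntA A q := by
    have hqX : X ≤ (q : ℝ) := by
      have h1 : X' ≤ q := by omega
      calc X ≤ (X' : ℝ) := Nat.le_ceil X
        _ ≤ (q : ℝ) := by exact_mod_cast h1
    have s1 := hORx q hqX
    have s0 : (cntA A n : ℝ) ≤ (cntA A (2 * (q : ℝ)) : ℝ) := by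
      have h2 : (n : ℝ) ≤ 2 * (q : ℝ) := by
        have : n ≤ 2 * q := by omega
        exact_mod_cast this
      exact_mod_cast cntA_mono A h2
    linarith
  -- per-term lower bound
  set P : ℝ := (cntA A n : ℝ) ^ t₁ / (cf * C ^ (3 * t₁) * n) with hP
  set Q : ℝ := (cntA A n : ℝ) ^ t₂ / (cg * C ^ t₂ * n) with hQ
  have hterm : ∀ k ∈ Finset.Ioc (n / 4) (n / 2), P * Q ≤ f k * g (n - k) := by
    intro k hk
    rw [Finset.mem_Ioc] at hk
    have hk0 : 0 < k := by omega
    have hkn : k ≤ n := hk.2.trans (Nat.div_le_self n 2)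
    have hPle : P ≤ f k := by
      have e1 : (cntA A n : ℝ) ^ t₁ ≤ C ^ (3 * t₁) * (cntA A k : ℝ) ^ t₁ := by
        have hmk : (cntA A m : ℝ) ≤ cntA A k := by
          exact_mod_cast cntA_mono A (show ((m:ℕ):ℝ) ≤ ((k:ℕ):ℝ) by exact_mod_cast hk.1.le)
        calc (cntA A n : ℝ) ^ t₁ ≤ (C ^ 3 * cntA A k) ^ t₁ := by
              apply pow_le_pow_left₀ (Nat.cast_nonneg _)
              exact hiA.trans (mul_le_mul_of_nonneg_left hmk (by positivity))
          _ = C ^ (3 * t₁) * (cntA A k : ℝ) ^ t₁ := by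
              rw [mul_pow, ← pow_mul]
      have e2 : (cntA A k : ℝ) ^ t₁ / k ≤ cf * f k := hNf k (by omega)
      have e3 : ((cntA A n : ℝ) ^ t₁ / C ^ (3 * t₁)) / n ≤ (cntA A k : ℝ) ^ t₁ / k := by
        apply div_le_div₀ (by positivity) _ (by exact_mod_cast hk0) (by exact_mod_cast hkn)
        rw [div_le_iff₀ (by positivity)]
        exact e1.trans_eq (mul_comm _ _)
      calc P = (1/cf) * (((cntA A n : ℝ) ^ t₁ / C ^ (3 * t₁)) / n) := by
            rw [hP]; ring
        _ ≤ (1/cf) * ((cntA A k : ℝ) ^ t₁ / k) :=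
            mul_le_mul_of_nonneg_left e3 (by positivity)
        _ ≤ (1/cf) * (cf * f k) := mul_le_mul_of_nonneg_left e2 (by positivity)
        _ = f k := by field_simp
    have hQle : Q ≤ g (n - k) := by
      have hqnk : q ≤ n - k := by omega
      have e1 : (cntA A n : ℝ) ^ t₂ ≤ C ^ t₂ * (cntA A ((n - k : ℕ)) : ℝ) ^ t₂ := by
        have hmk : (cntA A q : ℝ) ≤ cntA A ((n - k : ℕ)) := by
          exact_mod_cast cntA_mono A (show ((q:ℕ):ℝ) ≤ ((n-k:ℕ):ℝ) by exact_mod_cast hqnk)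
        calc (cntA A n : ℝ) ^ t₂ ≤ (C * cntA A ((n - k : ℕ)) : ℝ) ^ t₂ := by
              apply pow_le_pow_left₀ (Nat.cast_nonneg _)
              exact hiB.trans (mul_le_mul_of_nonneg_left hmk (by positivity))
          _ = C ^ t₂ * (cntA A ((n - k : ℕ)) : ℝ) ^ t₂ := mul_pow _ _ _
      have e2 : (cntA A ((n - k : ℕ)) : ℝ) ^ t₂ / ((n - k : ℕ) : ℝ) ≤ cg * g (n - k) :=
        hNg (n - k) (by omega)
      have e3 : ((cntA A n : ℝ) ^ t₂ / C ^ t₂) / n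
          ≤ (cntA A ((n - k : ℕ)) : ℝ) ^ t₂ / ((n - k : ℕ) : ℝ) := by
        apply div_le_div₀ (by positivity) _
          (by exact_mod_cast (show 0 < n - k by omega))
          (by exact_mod_cast Nat.sub_le n k)
        rw [div_le_iff₀ (by positivity)]
        exact e1.trans_eq (mul_comm _ _)
      calc Q = (1/cg) * (((cntA A n : ℝ) ^ t₂ / C ^ t₂) / n) := by
            rw [hQ]; ring
        _ ≤ (1/cg) * ((cntA A ((n - k : ℕ)) : ℝ) ^ t₂ / ((n - k : ℕ) : ℝ)) :=
            mul_le_mul_of_nonneg_left e3 (by positivity)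
        _ ≤ (1/cg) * (cg * g (n - k)) := mul_le_mul_of_nonneg_left e2 (by positivity)
        _ = g (n - k) := by field_simp
    have hQ0 : 0 ≤ Q := by rw [hQ]; positivity
    exact mul_le_mul hPle hQle hQ0 (hf k)
  -- assemble
  have hPQ0 : 0 ≤ P * Q := by rw [hP, hQ]; positivity
  have hsub : Finset.Ioc (n / 4) (n / 2) ⊆ Finset.Ioo 0 n := by
    intro x hx
    rw [Finset.mem_Ioc] at hx
    rw [Finset.mem_Ioo]
    omega
  have s1 : ∑ k ∈ Finset.Ioc (n / 4) (n / 2), f k * g (n - k)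
      ≤ ∑ k ∈ Finset.Ioo 0 n, f k * g (n - k) :=
    Finset.sum_le_sum_of_subset_of_nonneg hsub (fun k _ _ => mul_nonneg (hf k) (hg _))
  have s2 : (Finset.Ioc (n / 4) (n / 2)).card • (P * Q)
      ≤ ∑ k ∈ Finset.Ioc (n / 4) (n / 2), f k * g (n - k) :=
    Finset.card_nsmul_le_sum _ _ _ hterm
  rw [Nat.card_Ioc, nsmul_eq_mul] at s2
  have hcard : (n : ℝ) / 16 ≤ ((n / 2 - n / 4 : ℕ) : ℝ) := by
    have h16 : n ≤ 16 * (n / 2 - n / 4) := by omega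
    have : (n : ℝ) ≤ 16 * ((n / 2 - n / 4 : ℕ) : ℝ) := by exact_mod_cast h16
    linarith
  have heq : 1 / (16 * cf * cg * C ^ (3 * t₁) * C ^ t₂) * ((cntA A n : ℝ) ^ (t₁ + t₂) / n)
      = ((n : ℝ) / 16) * (P * Q) := by
    rw [hP, hQ, pow_add]
    have hn : (n : ℝ) ≠ 0 := by exact_mod_cast hn0.ne'
    field_simp
  calc 1 / (16 * cf * cg * C ^ (3 * t₁) * C ^ t₂) * ((cntA A n : ℝ) ^ (t₁ + t₂) / n)
      = ((n : ℝ) / 16) * (P * Q) := heq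
    _ ≤ ((n / 2 - n / 4 : ℕ) : ℝ) * (P * Q) := mul_le_mul_of_nonneg_right hcard hPQ0
    _ ≤ ∑ k ∈ Finset.Ioc (n / 4) (n / 2), f k * g (n - k) := s2
    _ ≤ ∑ k ∈ Finset.Ioo 0 n, f k * g (n - k) := s1

theorem stmt_10 (A : Set ℕ) (hA : ORplus A) (t₁ t₂ : ℕ) (h₁ : 1 ≤ t₁) (h₂ : 1 ≤ t₂)
    (f g : ℕ → ℝ) (hf : ∀ n, 0 ≤ f n) (hg : ∀ n, 0 ≤ g n)
    (hfθ : f =Θ[atTop] (fun n : ℕ => (cntA A n : ℝ) ^ t₁ / n))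
    (hgθ : g =Θ[atTop] (fun n : ℕ => (cntA A n : ℝ) ^ t₂ / n)) :
    (fun n : ℕ => ∑ k ∈ Finset.Ioo 0 n, f k * g (n - k)) =Θ[atTop]
      (fun n : ℕ => (cntA A n : ℝ) ^ (t₁ + t₂) / n) := by
  obtain ⟨hInf, hOR, hPI⟩ := hA
  obtain ⟨K₁, hK₁pos, hev₁⟩ := half_ub A hInf t₁ t₂ h₁
    (sum_pow_div_le A hInf hPI t₁ h₁) f g hf hg hfθ.isBigO hgθ.isBigO
  obtain ⟨K₂, hK₂pos, hev₂⟩ := half_ub A hInf t₂ t₁ h₂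
    (sum_pow_div_le A hInf hPI t₂ h₂) g f hg hf hgθ.isBigO hfθ.isBigO
  obtain ⟨c, hcpos, hevc⟩ := lb A t₁ t₂ (exOR A hOR) f g hf hg
    hfθ.symm.isBigO hgθ.symm.isBigO
  constructor
  · rw [isBigO_iff]
    refine ⟨K₁ + K₂, ?_⟩
    filter_upwards [hev₁, hev₂, eventually_ge_atTop 2] with n h1 h2 hn2
    have hnn : 0 ≤ ∑ k ∈ Finset.Ioo 0 n, f k * g (n - k) :=
      Finset.sum_nonneg fun k _ => mul_nonneg (hf k) (hg _)
    rw [Real.norm_of_nonneg hnn, Real.norm_of_nonneg (by positivity)]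
    rw [Nat.add_comm t₂ t₁] at h2
    have hIoo : Finset.Ioo 0 n = Finset.Ioc 0 (n - 1) := by
      ext x
      rw [Finset.mem_Ioo, Finset.mem_Ioc]
      omega
    have hsplit : ∑ k ∈ Finset.Ioc 0 (n / 2), f k * g (n - k)
        + ∑ k ∈ Finset.Ioc (n / 2) (n - 1), f k * g (n - k)
        = ∑ k ∈ Finset.Ioc 0 (n - 1), f k * g (n - k) :=
      Finset.sum_Ioc_consecutive _ (Nat.zero_le _) (by omega)
    have hrefl := reflect_sum f g hf hg n
    calc ∑ k ∈ Finset.Ioo 0 n, f k * g (n - k)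
        = ∑ k ∈ Finset.Ioc 0 (n / 2), f k * g (n - k)
          + ∑ k ∈ Finset.Ioc (n / 2) (n - 1), f k * g (n - k) := by rw [hIoo, ← hsplit]
      _ ≤ K₁ * ((cntA A n : ℝ) ^ (t₁ + t₂) / n)
          + ∑ j ∈ Finset.Ioc 0 (n / 2), g j * f (n - j) := add_le_add h1 hrefl
      _ ≤ K₁ * ((cntA A n : ℝ) ^ (t₁ + t₂) / n)
          + K₂ * ((cntA A n : ℝ) ^ (t₁ + t₂) / n) := add_le_add (le_refl _) h2
      _ = (K₁ + K₂) * ((cntA A n : ℝ) ^ (t₁ + t₂) / n) := by ring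
  · rw [isBigO_iff]
    refine ⟨1 / c, ?_⟩
    filter_upwards [hevc] with n hcn
    have hnn : 0 ≤ ∑ k ∈ Finset.Ioo 0 n, f k * g (n - k) :=
      Finset.sum_nonneg fun k _ => mul_nonneg (hf k) (hg _)
    rw [Real.norm_of_nonneg (by positivity), Real.norm_of_nonneg hnn]
    calc (cntA A n : ℝ) ^ (t₁ + t₂) / n
        = (1 / c) * (c * ((cntA A n : ℝ) ^ (t₁ + t₂) / n)) := by field_simp
      _ ≤ (1 / c) * ∑ k ∈ Finset.Ioo 0 n, f k * g (n - k) :=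
          mul_le_mul_of_nonneg_left hcn (by positivity)
end

section
/- Let 𝒜 ⊆ ℕ be a sequence. The following are equivalent: (i) A is O-regularly varying, i.e. for every λ > 0 one has A(λx) ≍ A(x) as x → ∞; (ii) A(2x) = O(A(x)); (iii) s_{𝒜,h}(x) = Θ(A(x)^h) for every h ≥ 1; (iv) s_{𝒜,h}(2x) = O(s_{𝒜,h}(x)) for some h ≥ 1 (equivalently, for every h ≥ 1). -/
open Filter Asymptotics MeasureTheory

/-- `sA A h x` is the number of ordered `h`-tuples of elements of `A` with sum at most `x`. -/
noncomputable def sA (A : Set ℕ) (h : ℕ) (x : ℝ) : ℕ :=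
  {t : Fin h → ℕ | (∀ i, t i ∈ A) ∧ ((∑ i, t i : ℕ) : ℝ) ≤ x}.ncard


lemma st12_cnt_set_finite (A : Set ℕ) (x : ℝ) : {n : ℕ | n ∈ A ∧ (n:ℝ) ≤ x}.Finite := by
  apply (Set.finite_Iic ⌊x⌋₊).subset
  intro n hn
  exact Nat.le_floor hn.2

lemma st12_cntA_mono (A : Set ℕ) {x y : ℝ} (hxy : x ≤ y) : cntA A x ≤ cntA A y :=
  Set.ncard_le_ncard (fun n hn => ⟨hn.1, hn.2.trans hxy⟩) (st12_cnt_set_finite A y)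

lemma st12_cntA_eventually_ge {A : Set ℕ} (hA : A.Infinite) (N : ℕ) :
    ∀ᶠ x : ℝ in atTop, N ≤ cntA A x := by
  obtain ⟨S, hS, hcard⟩ := hA.exists_subset_card_eq N
  filter_upwards [eventually_ge_atTop ((S.sup id : ℕ) : ℝ)] with x hx
  have hsub : (S : Set ℕ) ⊆ {n : ℕ | n ∈ A ∧ (n:ℝ) ≤ x} := by
    intro n hn
    refine ⟨hS hn, ?_⟩
    have : n ≤ S.sup id := Finset.le_sup (f := id) hn
    exact le_trans (by exact_mod_cast this) hx
  calc N = (S : Set ℕ).ncard := by rw [Set.ncard_coe_finset, hcard]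
    _ ≤ _ := Set.ncard_le_ncard hsub (st12_cnt_set_finite A x)

lemma st12_ncard_pi {h : ℕ} (s : Fin h → Set ℕ) :
    (Set.pi Set.univ s).ncard = ∏ i, (s i).ncard := by
  rw [← Nat.card_coe_set_eq, Nat.card_congr (Equiv.Set.univPi s), Nat.card_pi]
  simp [Nat.card_coe_set_eq]


lemma st12_sA_subset_pi (A : Set ℕ) (h : ℕ) (x : ℝ) :
    {t : Fin h → ℕ | (∀ i, t i ∈ A) ∧ ((∑ i, t i : ℕ) : ℝ) ≤ x} ⊆
      Set.pi Set.univ (fun _ => {n : ℕ | n ∈ A ∧ (n:ℝ) ≤ x}) := by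
  intro t ht i _
  refine ⟨ht.1 i, ?_⟩
  have h1 : t i ≤ ∑ j, t j := Finset.single_le_sum (fun j _ => Nat.zero_le _) (Finset.mem_univ i)
  exact le_trans (by exact_mod_cast h1) ht.2

lemma st12_sA_set_finite (A : Set ℕ) (h : ℕ) (x : ℝ) :
    {t : Fin h → ℕ | (∀ i, t i ∈ A) ∧ ((∑ i, t i : ℕ) : ℝ) ≤ x}.Finite :=
  (Set.Finite.pi fun _ => st12_cnt_set_finite A x).subset (st12_sA_subset_pi A h x)

lemma st12_sA_le_pow (A : Set ℕ) (h : ℕ) (x : ℝ) : sA A h x ≤ cntA A x ^ h := by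
  have := Set.ncard_le_ncard (st12_sA_subset_pi A h x) (Set.Finite.pi fun _ => st12_cnt_set_finite A x)
  rwa [st12_ncard_pi, Finset.prod_const, Finset.card_univ, Fintype.card_fin] at this

lemma st12_pow_le_sA (A : Set ℕ) {h : ℕ} (hh : 1 ≤ h) (x : ℝ) :
    cntA A (x / h) ^ h ≤ sA A h x := by
  have hsub : Set.pi Set.univ (fun _ : Fin h => {n : ℕ | n ∈ A ∧ (n:ℝ) ≤ x / h}) ⊆
      {t : Fin h → ℕ | (∀ i, t i ∈ A) ∧ ((∑ i, t i : ℕ) : ℝ) ≤ x} := by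
    intro t ht
    refine ⟨fun i => (ht i (Set.mem_univ i)).1, ?_⟩
    have hbd : ∀ i, (t i : ℝ) ≤ x / h := fun i => (ht i (Set.mem_univ i)).2
    have hhpos : (0:ℝ) < h := by exact_mod_cast hh
    calc ((∑ i, t i : ℕ) : ℝ) = ∑ i, (t i : ℝ) := by push_cast; ring
      _ ≤ ∑ _i : Fin h, (x / h) := Finset.sum_le_sum (fun i _ => hbd i)
      _ = h * (x / h) := by rw [Finset.sum_const, Finset.card_univ, Fintype.card_fin,
          nsmul_eq_mul]
      _ = x := by field_simp
  have := Set.ncard_le_ncard hsub (st12_sA_set_finite A h x)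
  rwa [st12_ncard_pi, Finset.prod_const, Finset.card_univ, Fintype.card_fin] at this

lemma st12_sA_mono (A : Set ℕ) (h : ℕ) {x y : ℝ} (hxy : x ≤ y) : sA A h x ≤ sA A h y :=
  Set.ncard_le_ncard (fun t ht => ⟨ht.1, ht.2.trans hxy⟩) (st12_sA_set_finite A h y)

lemma st12_sA_two_le (A : Set ℕ) (x : ℝ) :
    sA A 2 (2 * x) ≤ 2 * (cntA A x * cntA A (2 * x)) := by
  set B : ℝ → Set ℕ := fun y => {n : ℕ | n ∈ A ∧ (n:ℝ) ≤ y} with hB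
  have hsub : {t : Fin 2 → ℕ | (∀ i, t i ∈ A) ∧ ((∑ i, t i : ℕ) : ℝ) ≤ 2 * x} ⊆
      (Set.pi Set.univ ![B x, B (2*x)]) ∪ (Set.pi Set.univ ![B (2*x), B x]) := by
    intro t ht
    have hsum : (t 0 : ℝ) + (t 1 : ℝ) ≤ 2 * x := by
      have := ht.2
      rw [Fin.sum_univ_two] at this
      push_cast at this
      linarith
    by_cases h0 : (t 0 : ℝ) ≤ x
    · left
      intro i _
      fin_cases i
      · exact ⟨ht.1 0, h0⟩
      · refine ⟨ht.1 1, ?_⟩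
        have : (0:ℝ) ≤ t 0 := by positivity
        simpa using (by linarith : (t 1 : ℝ) ≤ 2 * x)
    · right
      intro i _
      fin_cases i
      · refine ⟨ht.1 0, ?_⟩
        have : (0:ℝ) ≤ t 1 := by positivity
        simpa using (by linarith : (t 0 : ℝ) ≤ 2 * x)
      · exact ⟨ht.1 1, by simpa using (by linarith : (t 1 : ℝ) ≤ x)⟩
  have hf1 : (Set.pi Set.univ ![B x, B (2*x)]).Finite :=
    Set.Finite.pi (fun i => by fin_cases i <;> exact st12_cnt_set_finite A _)
  have hf2 : (Set.pi Set.univ ![B (2*x), B x]).Finite :=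
    Set.Finite.pi (fun i => by fin_cases i <;> exact st12_cnt_set_finite A _)
  calc sA A 2 (2*x) ≤ (Set.pi Set.univ ![B x, B (2*x)] ∪ Set.pi Set.univ ![B (2*x), B x]).ncard :=
        Set.ncard_le_ncard hsub (hf1.union hf2)
    _ ≤ (Set.pi Set.univ ![B x, B (2*x)]).ncard + (Set.pi Set.univ ![B (2*x), B x]).ncard :=
        Set.ncard_union_le _ _
    _ = cntA A x * cntA A (2*x) + cntA A (2*x) * cntA A x := by
        rw [st12_ncard_pi, st12_ncard_pi, Fin.prod_univ_two, Fin.prod_univ_two]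
        simp [cntA, hB]
    _ = 2 * (cntA A x * cntA A (2*x)) := by ring


lemma st12_iter_double {f : ℝ → ℝ} (hf : (fun x => f (2 * x)) =O[atTop] f) (k : ℕ) :
    (fun x => f (2 ^ k * x)) =O[atTop] f := by
  induction k with
  | zero => simpa using isBigO_refl f atTop
  | succ k ih =>
      have ht : Tendsto (fun x : ℝ => (2:ℝ) ^ k * x) atTop atTop :=
        Tendsto.const_mul_atTop (by positivity) tendsto_id
      have h2 := hf.comp_tendsto ht
      have he : ∀ x : ℝ, 2 * (2 ^ k * x) = 2 ^ (k + 1) * x := fun x => by ring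
      simp only [Function.comp_def, he] at h2
      exact h2.trans ih

lemma st12_scale {A : Set ℕ} (hOR : (fun x : ℝ => (cntA A (2 * x) : ℝ)) =O[atTop]
    (fun x : ℝ => (cntA A x : ℝ))) {c : ℝ} (hc : 0 < c) :
    (fun x : ℝ => (cntA A (c * x) : ℝ)) =O[atTop] (fun x : ℝ => (cntA A x : ℝ)) := by
  obtain ⟨k, hk⟩ := pow_unbounded_of_one_lt c (one_lt_two : (1:ℝ) < 2)
  have h1 : (fun x : ℝ => (cntA A (c * x) : ℝ)) =O[atTop]
      (fun x : ℝ => (cntA A ((2:ℝ) ^ k * x) : ℝ)) := by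
    apply IsBigO.of_bound 1
    filter_upwards [eventually_ge_atTop (0:ℝ)] with x hx
    rw [one_mul, Real.norm_natCast, Real.norm_natCast]
    exact Nat.cast_le.mpr (st12_cntA_mono A (by nlinarith))
  exact h1.trans (st12_iter_double (f := fun x => (cntA A x : ℝ)) hOR k)

lemma st12_scale' {A : Set ℕ} (hOR : (fun x : ℝ => (cntA A (2 * x) : ℝ)) =O[atTop]
    (fun x : ℝ => (cntA A x : ℝ))) {c : ℝ} (hc : 0 < c) :
    (fun x : ℝ => (cntA A x : ℝ)) =O[atTop] (fun x : ℝ => (cntA A (c * x) : ℝ)) := by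
  have ht : Tendsto (fun x : ℝ => c * x) atTop atTop :=
    Tendsto.const_mul_atTop hc tendsto_id
  have h1 := (st12_scale hOR (inv_pos.mpr hc)).comp_tendsto ht
  have he : ∀ x : ℝ, c⁻¹ * (c * x) = x := fun x => by field_simp
  simpa only [Function.comp_def, he] using h1


lemma st12_two_imp_three {A : Set ℕ}
    (h2 : (fun x : ℝ => (cntA A (2 * x) : ℝ)) =O[atTop] (fun x : ℝ => (cntA A x : ℝ)))
    {h : ℕ} (hh : 1 ≤ h) :
    (fun x : ℝ => (sA A h x : ℝ)) =Θ[atTop] (fun x : ℝ => (cntA A x : ℝ) ^ h) := by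
  have hhpos : (0:ℝ) < h := by exact_mod_cast hh
  constructor
  · apply IsBigO.of_bound 1
    filter_upwards with x
    rw [one_mul, Real.norm_natCast]
    have : ((sA A h x : ℝ)) ≤ ((cntA A x : ℝ)) ^ h := by
      exact_mod_cast st12_sA_le_pow A h x
    calc (sA A h x : ℝ) ≤ (cntA A x : ℝ) ^ h := this
      _ ≤ ‖(cntA A x : ℝ) ^ h‖ := le_abs_self _
  · have step1 : (fun x : ℝ => (cntA A x : ℝ)) =O[atTop]
        (fun x : ℝ => (cntA A (x / h) : ℝ)) := by
      have := st12_scale' h2 (inv_pos.mpr hhpos)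
      simpa only [inv_mul_eq_div] using this
    have step2 := step1.pow h
    have step3 : (fun x : ℝ => (cntA A (x / h) : ℝ) ^ h) =O[atTop]
        (fun x : ℝ => (sA A h x : ℝ)) := by
      apply IsBigO.of_bound 1
      filter_upwards with x
      simp only [one_mul, norm_pow, Real.norm_natCast]
      exact_mod_cast st12_pow_le_sA A hh x
    exact step2.trans step3

lemma st12_two_imp_five {A : Set ℕ}
    (h2 : (fun x : ℝ => (cntA A (2 * x) : ℝ)) =O[atTop] (fun x : ℝ => (cntA A x : ℝ)))
    {h : ℕ} (hh : 1 ≤ h) :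
    (fun x : ℝ => (sA A h (2 * x) : ℝ)) =O[atTop] (fun x : ℝ => (sA A h x : ℝ)) := by
  have h3 := st12_two_imp_three h2 hh
  have ht : Tendsto (fun x : ℝ => 2 * x) atTop atTop :=
    Tendsto.const_mul_atTop two_pos tendsto_id
  have c1 : (fun x : ℝ => (sA A h (2 * x) : ℝ)) =O[atTop]
      (fun x : ℝ => (cntA A (2 * x) : ℝ) ^ h) := by
    simpa only [Function.comp_def] using h3.isBigO.comp_tendsto ht
  have c2 : (fun x : ℝ => (cntA A (2 * x) : ℝ) ^ h) =O[atTop]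
      (fun x : ℝ => (cntA A x : ℝ) ^ h) := h2.pow h
  exact (c1.trans c2).trans h3.symm.isBigO

lemma st12_three_imp_two {A : Set ℕ} (hA : A.Infinite)
    (h3 : ∀ h : ℕ, 1 ≤ h →
      (fun x : ℝ => (sA A h x : ℝ)) =Θ[atTop] (fun x : ℝ => (cntA A x : ℝ) ^ h)) :
    (fun x : ℝ => (cntA A (2 * x) : ℝ)) =O[atTop] (fun x : ℝ => (cntA A x : ℝ)) := by
  have ht : Tendsto (fun x : ℝ => 2 * x) atTop atTop :=
    Tendsto.const_mul_atTop two_pos tendsto_id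
  obtain ⟨C, hCpos, hCbd⟩ := (h3 2 (by norm_num)).symm.isBigO.exists_pos
  have hCbd' := ht.eventually hCbd.bound
  apply IsBigO.of_bound (2 * C)
  filter_upwards [hCbd', ht.eventually (st12_cntA_eventually_ge hA 1)] with x hC1 h1
  have hapos : (0:ℝ) < (cntA A (2 * x) : ℝ) := by
    have : (1:ℝ) ≤ (cntA A (2 * x) : ℝ) := by exact_mod_cast h1
    linarith
  have h2 : (cntA A (2 * x) : ℝ) ^ 2 ≤ C * (sA A 2 (2 * x) : ℝ) := by
    simp only [norm_pow, Real.norm_natCast] at hC1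
    exact hC1
  have h4 : (sA A 2 (2 * x) : ℝ) ≤ 2 * ((cntA A x : ℝ) * (cntA A (2 * x) : ℝ)) := by
    exact_mod_cast st12_sA_two_le A x
  have key : (cntA A (2 * x) : ℝ) * (cntA A (2 * x) : ℝ) ≤
      (2 * C * (cntA A x : ℝ)) * (cntA A (2 * x) : ℝ) := by
    calc (cntA A (2 * x) : ℝ) * (cntA A (2 * x) : ℝ) = (cntA A (2 * x) : ℝ) ^ 2 := by ring
      _ ≤ C * (sA A 2 (2 * x) : ℝ) := h2
      _ ≤ C * (2 * ((cntA A x : ℝ) * (cntA A (2 * x) : ℝ))) :=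
          mul_le_mul_of_nonneg_left h4 hCpos.le
      _ = (2 * C * (cntA A x : ℝ)) * (cntA A (2 * x) : ℝ) := by ring
  rw [Real.norm_natCast, Real.norm_natCast]
  exact le_of_mul_le_mul_right key hapos

lemma st12_four_imp_two {A : Set ℕ}
    (h4 : ∃ h : ℕ, 1 ≤ h ∧
      (fun x : ℝ => (sA A h (2 * x) : ℝ)) =O[atTop] (fun x : ℝ => (sA A h x : ℝ))) :
    (fun x : ℝ => (cntA A (2 * x) : ℝ)) =O[atTop] (fun x : ℝ => (cntA A x : ℝ)) := by
  obtain ⟨h, hh, hO⟩ := h4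
  have hhpos : (0:ℝ) < h := by exact_mod_cast hh
  obtain ⟨k, hk⟩ := pow_unbounded_of_one_lt (2 * (h:ℝ)) (one_lt_two : (1:ℝ) < 2)
  obtain ⟨C, hCpos, hCbd⟩ :=
    (st12_iter_double (f := fun x => (sA A h x : ℝ)) hO k).exists_pos
  set D : ℝ := C ^ ((h:ℝ)⁻¹) with hD
  have hDpos : 0 < D := Real.rpow_pos_of_pos hCpos _
  have hDh : D ^ h = C := by
    rw [hD, ← Real.rpow_natCast (C ^ ((h:ℝ)⁻¹)) h, ← Real.rpow_mul hCpos.le,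
      inv_mul_cancel₀ (by positivity), Real.rpow_one]
  apply IsBigO.of_bound D
  filter_upwards [hCbd.bound, eventually_ge_atTop (0:ℝ)] with x hCx hx
  rw [Real.norm_natCast, Real.norm_natCast]
  have key : (cntA A (2 * x) : ℝ) ^ h ≤ (D * (cntA A x : ℝ)) ^ h := by
    have s1 : (cntA A (2 * x) : ℝ) ^ h ≤ (cntA A ((2:ℝ) ^ k * x / h) : ℝ) ^ h := by
      have hmono : cntA A (2 * x) ≤ cntA A ((2:ℝ) ^ k * x / h) := by
        apply st12_cntA_mono
        rw [le_div_iff₀ hhpos]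
        nlinarith
      exact pow_le_pow_left₀ (by positivity) (Nat.cast_le.mpr hmono) h
    have s2 : ((cntA A ((2:ℝ) ^ k * x / h) : ℝ)) ^ h ≤ (sA A h ((2:ℝ) ^ k * x) : ℝ) := by
      exact_mod_cast st12_pow_le_sA A hh ((2:ℝ) ^ k * x)
    have s3 : (sA A h ((2:ℝ) ^ k * x) : ℝ) ≤ C * (sA A h x : ℝ) := by
      rw [Real.norm_natCast, Real.norm_natCast] at hCx
      exact hCx
    have s4 : (sA A h x : ℝ) ≤ (cntA A x : ℝ) ^ h := by exact_mod_cast st12_sA_le_pow A h x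
    calc (cntA A (2 * x) : ℝ) ^ h ≤ (cntA A ((2:ℝ) ^ k * x / h) : ℝ) ^ h := s1
      _ ≤ (sA A h ((2:ℝ) ^ k * x) : ℝ) := s2
      _ ≤ C * (sA A h x : ℝ) := s3
      _ ≤ C * (cntA A x : ℝ) ^ h := mul_le_mul_of_nonneg_left s4 hCpos.le
      _ = (D * (cntA A x : ℝ)) ^ h := by rw [mul_pow, hDh]
  exact le_of_pow_le_pow_left₀ (by omega) (by positivity) key

theorem stmt_12 (A : Set ℕ) (hA : A.Infinite) :
    List.TFAE [
      -- (i) A is O-regularly varying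
      ∀ lam : ℝ, 0 < lam →
        (fun x : ℝ => (cntA A (lam * x) : ℝ)) =Θ[atTop] (fun x : ℝ => (cntA A x : ℝ)),
      -- (ii) A(2x) = O(A(x))
      (fun x : ℝ => (cntA A (2 * x) : ℝ)) =O[atTop] (fun x : ℝ => (cntA A x : ℝ)),
      -- (iii) s_{A,h}(x) = Θ(A(x)^h) for every h ≥ 1
      ∀ h : ℕ, 1 ≤ h →
        (fun x : ℝ => (sA A h x : ℝ)) =Θ[atTop] (fun x : ℝ => (cntA A x : ℝ) ^ h),
      -- (iv) for some h ≥ 1, s_{A,h}(2x) = O(s_{A,h}(x))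
      ∃ h : ℕ, 1 ≤ h ∧
        (fun x : ℝ => (sA A h (2 * x) : ℝ)) =O[atTop] (fun x : ℝ => (sA A h x : ℝ)),
      -- (iv') for every h ≥ 1, s_{A,h}(2x) = O(s_{A,h}(x))
      ∀ h : ℕ, 1 ≤ h →
        (fun x : ℝ => (sA A h (2 * x) : ℝ)) =O[atTop] (fun x : ℝ => (sA A h x : ℝ))
    ] := by
  tfae_have 1 → 2 := fun h1 => (h1 2 two_pos).1
  tfae_have 2 → 1 := fun h2 lam hlam => ⟨st12_scale h2 hlam, st12_scale' h2 hlam⟩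
  tfae_have 2 → 3 := fun h2 h hh => st12_two_imp_three h2 hh
  tfae_have 3 → 2 := st12_three_imp_two hA
  tfae_have 2 → 5 := fun h2 h hh => st12_two_imp_five h2 hh
  tfae_have 5 → 4 := fun h5 => ⟨1, le_rfl, h5 1 le_rfl⟩
  tfae_have 4 → 2 := st12_four_imp_two
  tfae_finish
end

section
/- Let 𝒞 := [0, 2^{2^{17}}] ∪ ⋃_{k≥17} ( {2^{2^k} + t(k−1) : 0 ≤ t ≤ 2^{2^k}} ∪ [k·2^{2^k}, 2^{2^{k+1}}] ) ⊆ ℕ (intervals meaning the integers they contain), with increasing enumeration c₀ < c₁ < c₂ < ⋯. Then 2𝒞 = ℕ (so 𝒞 is an additive basis of order 2), but c_{2n} ≠ O(c_n) (indeed limsup_{n→∞} c_{2n}/c_n = ∞), so 𝒞 is not a PI sequence. -/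
open Filter Asymptotics

/-- The sequence 𝒞 from Remark A.9: `[0, 2^{2^{17}}]` together with, for each `k ≥ 17`,
the arithmetic progression `{2^{2^k} + t(k−1) : 0 ≤ t ≤ 2^{2^k}}` and the interval
`[k·2^{2^k}, 2^{2^{k+1}}]`. -/
def Cseq : Set ℕ :=
  Set.Icc 0 (2 ^ 2 ^ 17) ∪
    ⋃ k ∈ Set.Ici 17,
      ({m : ℕ | ∃ t ≤ 2 ^ 2 ^ k, m = 2 ^ 2 ^ k + t * (k - 1)} ∪
        Set.Icc (k * 2 ^ 2 ^ k) (2 ^ 2 ^ (k + 1)))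

namespace CseqAux

lemma mem_Icc17 {n : ℕ} (h : n ≤ 2 ^ 2 ^ 17) : n ∈ Cseq :=
  Or.inl ⟨Nat.zero_le _, h⟩

lemma mem_AP {k t : ℕ} (hk : 17 ≤ k) (ht : t ≤ 2 ^ 2 ^ k) :
    2 ^ 2 ^ k + t * (k - 1) ∈ Cseq :=
  Or.inr (Set.mem_biUnion (Set.mem_Ici.mpr hk) (Or.inl ⟨t, ht, rfl⟩))

lemma mem_I {k m : ℕ} (hk : 17 ≤ k) (h1 : k * 2 ^ 2 ^ k ≤ m) (h2 : m ≤ 2 ^ 2 ^ (k + 1)) :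
    m ∈ Cseq :=
  Or.inr (Set.mem_biUnion (Set.mem_Ici.mpr hk) (Or.inr ⟨h1, h2⟩))

lemma le_two_pow_two_pow_pred (k : ℕ) : k ≤ 2 ^ (2 ^ k - 1) := by
  have h1 : k < 2 ^ k := (Nat.lt_two_pow_self (n := k))
  calc k ≤ 2 ^ k - 1 := by omega
  _ ≤ 2 ^ (2 ^ k - 1) := Nat.le_of_lt (Nat.lt_two_pow_self)

/-- `k * 2^{2^k} ≤ 2^{2^{k+1} - 1}` -/
lemma mul_le_pow_pred (k : ℕ) : k * 2 ^ 2 ^ k ≤ 2 ^ (2 ^ (k + 1) - 1) := by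
  have h1 : k ≤ 2 ^ (2 ^ k - 1) := le_two_pow_two_pow_pred k
  have h2 : 0 < 2 ^ k := Nat.pow_pos (by norm_num)
  calc k * 2 ^ 2 ^ k ≤ 2 ^ (2 ^ k - 1) * 2 ^ 2 ^ k := Nat.mul_le_mul_right _ h1
  _ = 2 ^ (2 ^ k - 1 + 2 ^ k) := (pow_add 2 _ _).symm
  _ = 2 ^ (2 ^ (k + 1) - 1) := by
        congr 1
        have h3 : 1 ≤ 2 ^ k := Nat.one_le_two_pow
        rw [Nat.pow_succ]
        omega

lemma mul_le_pow_succ (k : ℕ) : k * 2 ^ 2 ^ k ≤ 2 ^ 2 ^ (k + 1) :=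
  le_trans (mul_le_pow_pred k) (Nat.pow_le_pow_right (by norm_num) (Nat.sub_le _ _))

lemma two_pow_mono {a b : ℕ} (h : a ≤ b) : (2:ℕ) ^ 2 ^ a ≤ 2 ^ 2 ^ b :=
  Nat.pow_le_pow_right (by norm_num) (Nat.pow_le_pow_right (by norm_num) h)

/-- Characterization: for `k ≥ 18`, elements of `Cseq` strictly between
`2^{2^k}` (inclusive) and `k·2^{2^k}` (exclusive) lie on the progression. -/
lemma mem_between {k m : ℕ} (hk : 18 ≤ k) (hm : m ∈ Cseq)
    (h1 : 2 ^ 2 ^ k ≤ m) (h2 : m < k * 2 ^ 2 ^ k) :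
    ∃ t ≤ 2 ^ 2 ^ k, m = 2 ^ 2 ^ k + t * (k - 1) := by
  rcases hm with h | h
  · exfalso
    have : (2:ℕ) ^ 2 ^ 17 < 2 ^ 2 ^ k :=
      Nat.pow_lt_pow_right (by norm_num) (Nat.pow_lt_pow_right (by norm_num) (by omega))
    exact absurd (le_trans h1 h.2) (by omega)
  · simp only [Set.mem_iUnion, Set.mem_Ici, exists_prop] at h
    obtain ⟨k', hk', hmem⟩ := h
    rcases lt_trichotomy k' k with hlt | rfl | hgt
    · -- everything in block k' is ≤ 2^{2^k}, so m = 2^{2^k}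
      have hub : m ≤ 2 ^ 2 ^ (k' + 1) := by
        rcases hmem with ⟨t, ht, rfl⟩ | ⟨_, hI⟩
        · calc 2 ^ 2 ^ k' + t * (k' - 1) ≤ 2 ^ 2 ^ k' + 2 ^ 2 ^ k' * (k' - 1) := by
                exact Nat.add_le_add_left (Nat.mul_le_mul_right _ ht) _
          _ = k' * 2 ^ 2 ^ k' := by
                have : 1 ≤ k' := by omega
                ring_nf
                rw [Nat.mul_comm]
                nlinarith [Nat.sub_add_cancel this]
          _ ≤ 2 ^ 2 ^ (k' + 1) := mul_le_pow_succ k'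
        · exact hI
      have hm2 : m = 2 ^ 2 ^ k := le_antisymm (le_trans hub (two_pow_mono (by omega))) h1
      exact ⟨0, Nat.zero_le _, by omega⟩
    · rcases hmem with ⟨t, ht, rfl⟩ | ⟨hlow, _⟩
      · exact ⟨t, ht, rfl⟩
      · exact absurd hlow (by omega)
    · exfalso
      have hq : 2 ^ 2 ^ (k + 1) ≤ 2 ^ 2 ^ k' := two_pow_mono (by omega)
      have hlow : 2 ^ 2 ^ k' ≤ m := by
        rcases hmem with ⟨t, ht, rfl⟩ | ⟨hlow, _⟩
        · exact Nat.le_add_right _ _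
        · exact le_trans (Nat.le_mul_of_pos_left _ (by omega)) hlow
      have := mul_le_pow_succ k
      omega

open Nat in
lemma Cseq_infinite : {n | n ∈ Cseq}.Infinite := by
  apply Set.infinite_of_forall_exists_gt
  intro a
  refine ⟨2 ^ 2 ^ (max 17 a + 1), mem_I (le_max_left _ _) (mul_le_pow_succ _) le_rfl, ?_⟩
  calc a ≤ max 17 a := le_max_right _ _
  _ < 2 ^ (max 17 a) := Nat.lt_two_pow_self
  _ ≤ 2 ^ 2 ^ (max 17 a + 1) := Nat.pow_le_pow_right (by norm_num)
      (le_trans (Nat.le_of_lt (Nat.lt_two_pow_self)) (Nat.pow_le_pow_right (by norm_num) (Nat.le_succ _)))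

lemma two_pow_eq (k : ℕ) : (2:ℕ) ^ (2 ^ k - 1) * 2 = 2 ^ 2 ^ k := by
  rw [← Nat.pow_succ]; congr 1
  have : 1 ≤ 2 ^ k := Nat.one_le_two_pow; omega

lemma ratio_lemma {k : ℕ} (hk : 18 ≤ k) :
    ∃ n : ℕ, 2 ^ (2 ^ k - 1) ≤ n ∧
      Nat.nth (· ∈ Cseq) n = 2 ^ 2 ^ k ∧
      2 ^ 2 ^ k + 2 ^ (2 ^ k - 1) * (k - 1) ≤ Nat.nth (· ∈ Cseq) (2 * n) := by
  classical
  set p : ℕ → Prop := (· ∈ Cseq) with hp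
  set Q : ℕ := 2 ^ 2 ^ k with hQdef
  set T : ℕ := 2 ^ (2 ^ k - 1) with hTdef
  have hinf : (setOf p).Infinite := Cseq_infinite
  have hQT : Q = 2 * T := by
    rw [hQdef, hTdef, ← Nat.pow_succ']
    congr 1
    have : 1 ≤ 2 ^ k := Nat.one_le_two_pow
    omega
  have hpQ : p Q := by
    have h0 := mem_AP (k := k) (t := 0) (by omega : 17 ≤ k) (Nat.zero_le _)
    simp only [Nat.zero_mul, Nat.add_zero] at h0
    exact h0
  set n := Nat.count p Q with hn
  have hnth : Nat.nth p n = Q := Nat.nth_count hpQ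
  have hk1 : k - 1 + 1 = k := by omega
  have hWT : (k - 1) * 2 ^ 2 ^ (k - 1) ≤ T := by
    have := mul_le_pow_pred (k - 1)
    rwa [hk1] at this
  have hlow : Q - (k - 1) * 2 ^ 2 ^ (k - 1) ≤ n := by
    rw [hn, Nat.count_eq_card_filter_range]
    have hsub : Finset.Ico ((k - 1) * 2 ^ 2 ^ (k - 1)) Q ⊆ {x ∈ Finset.range Q | p x} := by
      intro m hm
      simp only [Finset.mem_Ico] at hm
      simp only [Finset.mem_filter, Finset.mem_range]
      refine ⟨hm.2, ?_⟩
      show m ∈ Cseq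
      refine mem_I (by omega) hm.1 ?_
      rw [hk1]; exact hm.2.le
    calc Q - (k - 1) * 2 ^ 2 ^ (k - 1) = (Finset.Ico ((k - 1) * 2 ^ 2 ^ (k - 1)) Q).card := by
          rw [Nat.card_Ico]
    _ ≤ _ := Finset.card_le_card hsub
  have hTn : T ≤ n := by omega
  set y := Q + T * (k - 1) with hy
  have hycount : Nat.count p y ≤ n + T := by
    rw [hn, Nat.count_eq_card_filter_range, Nat.count_eq_card_filter_range]
    have hyQ : Q ≤ y := Nat.le_add_right _ _
    have hsplit : Finset.range y = Finset.range Q ∪ Finset.Ico Q y := by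
      rw [Finset.range_eq_Ico, Finset.range_eq_Ico]
      exact (Finset.Ico_union_Ico_eq_Ico (Nat.zero_le _) hyQ).symm
    rw [hsplit, Finset.filter_union]
    refine le_trans (Finset.card_union_le _ _) (Nat.add_le_add_left ?_ _)
    have hsub : {x ∈ Finset.Ico Q y | p x} ⊆
        (Finset.range T).image (fun t => Q + t * (k - 1)) := by
      intro m hm
      simp only [Finset.mem_filter, Finset.mem_Ico] at hm
      obtain ⟨⟨hm1, hm2⟩, hm3⟩ := hm
      have hmk : m < k * Q := by
        have hyk : y ≤ k * Q := by
          have h1 : T * (k - 1) ≤ Q * (k - 1) := Nat.mul_le_mul_right _ (by omega)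
          have h2 : Q + Q * (k - 1) = k * Q := by
            rw [Nat.mul_comm k Q]
            conv_rhs => rw [← hk1]
            rw [Nat.mul_succ]
            omega
          omega
        omega
      obtain ⟨t, ht, htm⟩ := mem_between hk hm3 hm1 hmk
      simp only [Finset.mem_image, Finset.mem_range]
      refine ⟨t, ?_, htm.symm⟩
      have hlt : t * (k - 1) < T * (k - 1) := by omega
      exact Nat.lt_of_mul_lt_mul_right hlt
    calc _ ≤ ((Finset.range T).image (fun t => Q + t * (k - 1))).card :=
          Finset.card_le_card hsub
    _ ≤ T := le_trans Finset.card_image_le (le_of_eq (Finset.card_range T))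
  have hfinal : y ≤ Nat.nth p (2 * n) :=
    (Nat.count_le_iff_le_nth hinf).mp (by omega)
  exact ⟨n, hTn, hnth, hfinal⟩

lemma exists_k {n : ℕ} (h : 2 ^ 2 ^ 17 < n) :
    ∃ k, 17 ≤ k ∧ 2 ^ 2 ^ k ≤ n ∧ n < 2 ^ 2 ^ (k + 1) := by
  have hn0 : n ≠ 0 := by
    have := Nat.lt_of_le_of_lt (Nat.zero_le _) h; omega
  have hj1 : 2 ^ Nat.log 2 n ≤ n := Nat.pow_log_le_self 2 hn0
  have hj2 : n < 2 ^ (Nat.log 2 n + 1) := Nat.lt_pow_succ_log_self (by norm_num) n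
  have hjge : 2 ^ 17 ≤ Nat.log 2 n := (Nat.le_log_iff_pow_le (by norm_num) hn0).mpr h.le
  have hj0 : Nat.log 2 n ≠ 0 := by
    intro h0; rw [h0] at hjge; exact absurd hjge (by norm_num)
  refine ⟨Nat.log 2 (Nat.log 2 n), (Nat.le_log_iff_pow_le (by norm_num) hj0).mpr hjge,
    le_trans (Nat.pow_le_pow_right (by norm_num) (Nat.pow_log_le_self 2 hj0)) hj1,
    lt_of_lt_of_le hj2 (Nat.pow_le_pow_right (by norm_num)
      (Nat.lt_pow_succ_log_self (by norm_num) (Nat.log 2 n)))⟩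

lemma part1 (n : ℕ) : ∃ a ∈ Cseq, ∃ b ∈ Cseq, a + b = n := by
  rcases le_or_gt n (2 ^ 2 ^ 17) with h | h
  · exact ⟨n, mem_Icc17 h, 0, mem_Icc17 (Nat.zero_le _), Nat.add_zero n⟩
  obtain ⟨k, hk17, hQn, hnQ⟩ := exists_k h
  rcases le_or_gt (k * 2 ^ 2 ^ k) n with hbig | hsmall
  · exact ⟨n, mem_I hk17 hbig hnQ.le, 0, mem_Icc17 (Nat.zero_le _), Nat.add_zero n⟩
  rcases Nat.lt_or_ge k 18 with hk18 | hk18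
  · -- k = 17 : use the progression A₁₇ plus a small element
    have hke : k = 17 := by omega
    subst hke
    set m := n - 2 ^ 2 ^ 17 with hm
    set t := m / 16 with ht
    have hdm := Nat.div_add_mod m 16
    have hmod : m % 16 < 16 := Nat.mod_lt _ (by norm_num)
    have h16 : (16 : ℕ) ≤ 2 ^ 2 ^ 17 := by
      calc (16 : ℕ) = 2 ^ 4 := by norm_num
      _ ≤ 2 ^ 2 ^ 17 := Nat.pow_le_pow_right (by norm_num) (by norm_num)
    have h17Q : 17 * 2 ^ 2 ^ 17 = 16 * 2 ^ 2 ^ 17 + 2 ^ 2 ^ 17 := by ring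
    have htQ : t ≤ 2 ^ 2 ^ 17 := by
      have : m < 2 ^ 2 ^ 17 * 16 := by omega
      have := (Nat.div_lt_iff_lt_mul (by norm_num : (0:ℕ) < 16)).mpr this
      omega
    refine ⟨2 ^ 2 ^ 17 + t * (17 - 1), mem_AP le_rfl htQ, m % 16,
      mem_Icc17 (by omega), ?_⟩
    have : t * (17 - 1) = 16 * t := by norm_num [Nat.mul_comm]
    omega
  · -- 18 ≤ k
    have hk1 : k - 1 + 1 = k := by omega
    have hE : 2 ^ (2 ^ k - 1) * 2 = 2 ^ 2 ^ k := by
      rw [← Nat.pow_succ]; congr 1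
      have : 1 ≤ 2 ^ k := Nat.one_le_two_pow; omega
    have hW : (k - 1) * 2 ^ 2 ^ (k - 1) ≤ 2 ^ (2 ^ k - 1) := by
      have := mul_le_pow_pred (k - 1); rwa [hk1] at this
    have hkE : k ≤ 2 ^ (2 ^ k - 1) := le_two_pow_two_pow_pred k
    rcases le_or_gt n (2 * 2 ^ 2 ^ k) with hcase | hcase
    · -- write n as sum of two halves, both in I_{k-1}
      refine ⟨n - n / 2, ?_, n / 2, ?_, by omega⟩
      · refine mem_I (k := k - 1) (by omega) (by omega) ?_
        rw [hk1]; omega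
      · refine mem_I (k := k - 1) (by omega) (by omega) ?_
        rw [hk1]; omega
    · -- progression element from A_k plus an element of I_{k-1}
      have hkpos : 0 < k - 1 := by omega
      set d := n - 2 * 2 ^ 2 ^ k with hd
      set t := d / (k - 1) + 1 with ht
      have hdm := Nat.div_add_mod d (k - 1)
      have hmod : d % (k - 1) < k - 1 := Nat.mod_lt _ hkpos
      have hb : (k - 2) * 2 ^ 2 ^ k = k * 2 ^ 2 ^ k - 2 * 2 ^ 2 ^ k := Nat.sub_mul k 2 _
      have hb2 : (k - 2) * 2 ^ 2 ^ k ≤ (k - 1) * 2 ^ 2 ^ k :=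
        Nat.mul_le_mul_right _ (by omega)
      have hb3 : (k - 1) * 2 ^ 2 ^ k = 2 ^ 2 ^ k * (k - 1) := Nat.mul_comm _ _
      have hdlt : d < 2 ^ 2 ^ k * (k - 1) := by omega
      have htQ : t ≤ 2 ^ 2 ^ k := by
        have := (Nat.div_lt_iff_lt_mul hkpos).mpr hdlt
        omega
      have htv : t * (k - 1) = (k - 1) * (d / (k - 1)) + (k - 1) := by
        rw [ht, Nat.add_mul, Nat.one_mul, Nat.mul_comm]
      refine ⟨2 ^ 2 ^ k + t * (k - 1), mem_AP (by omega) htQ,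
        n - (2 ^ 2 ^ k + t * (k - 1)), ?_, ?_⟩
      · refine mem_I (k := k - 1) (by omega) (by omega) ?_
        rw [hk1]; omega
      · omega

end CseqAux

theorem stmt_18 :
    (∀ n : ℕ, ∃ a ∈ Cseq, ∃ b ∈ Cseq, a + b = n) ∧
    ¬ ((fun n : ℕ => (Nat.nth (· ∈ Cseq) (2 * n) : ℝ)) =O[atTop]
        (fun n : ℕ => (Nat.nth (· ∈ Cseq) n : ℝ))) ∧
    ∀ M : ℝ, ∃ᶠ n : ℕ in atTop,
      M < (Nat.nth (· ∈ Cseq) (2 * n) : ℝ) / (Nat.nth (· ∈ Cseq) n : ℝ) := by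
  classical
  have h3 : ∀ M : ℝ, ∃ᶠ n : ℕ in atTop,
      M < (Nat.nth (· ∈ Cseq) (2 * n) : ℝ) / (Nat.nth (· ∈ Cseq) n : ℝ) := by
    intro M
    rw [Filter.frequently_atTop]
    intro N
    set k := max 18 (max N (⌈2 * M⌉₊ + 2)) with hkdef
    have hk18 : 18 ≤ k := le_max_left _ _
    obtain ⟨n, hn1, hn2, hn3⟩ := CseqAux.ratio_lemma hk18
    have hkn : k ≤ 2 ^ (2 ^ k - 1) := CseqAux.le_two_pow_two_pow_pred k
    refine ⟨n, ?_, ?_⟩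
    · have hNk : N ≤ k := le_trans (le_max_left _ _) (le_max_right _ _)
      omega
    · have hQpos : (0:ℝ) < ((2:ℕ) ^ 2 ^ k : ℕ) := by positivity
      rw [hn2, lt_div_iff₀ hQpos]
      have hTpos : (0:ℝ) < (2:ℝ) ^ (2 ^ k - 1) := by positivity
      have hEr : ((2:ℝ)) ^ 2 ^ k = 2 ^ (2 ^ k - 1) * 2 := by
        exact_mod_cast (congrArg (fun x : ℕ => (x : ℝ)) (CseqAux.two_pow_eq k)).symm
      have hceil : 2 * M ≤ (⌈2 * M⌉₊ : ℝ) := Nat.le_ceil _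
      have hkM : (⌈2 * M⌉₊ : ℕ) + 2 ≤ k := le_trans (le_max_right _ _) (le_max_right _ _)
      have hkMR : ((⌈2 * M⌉₊ : ℕ) : ℝ) + 2 ≤ (k:ℝ) := by exact_mod_cast hkM
      have h1k : (1:ℕ) ≤ k := by omega
      have hnth : (2:ℝ) ^ 2 ^ k + 2 ^ (2 ^ k - 1) * ((k:ℝ) - 1)
          ≤ (Nat.nth (· ∈ Cseq) (2 * n) : ℝ) := by
        have hc : ((2 ^ 2 ^ k + 2 ^ (2 ^ k - 1) * (k - 1) : ℕ) : ℝ)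
            ≤ (Nat.nth (· ∈ Cseq) (2 * n) : ℝ) := Nat.cast_le.mpr hn3
        push_cast [Nat.cast_sub h1k] at hc
        convert hc using 2
      have c1 : M * ((2:ℝ) ^ 2 ^ k) = (2 * M) * 2 ^ (2 ^ k - 1) := by rw [hEr]; ring
      have c2 : (2 * M) * 2 ^ (2 ^ k - 1) ≤ (⌈2 * M⌉₊ : ℝ) * 2 ^ (2 ^ k - 1) :=
        mul_le_mul_of_nonneg_right hceil hTpos.le
      have c3 : ((⌈2 * M⌉₊ : ℕ) : ℝ) ≤ (k:ℝ) - 2 := by linarith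
      have c4 : ((⌈2 * M⌉₊ : ℕ) : ℝ) * 2 ^ (2 ^ k - 1) ≤ ((k:ℝ) - 2) * 2 ^ (2 ^ k - 1) :=
        mul_le_mul_of_nonneg_right c3 hTpos.le
      have c5 : ((k:ℝ) - 2) * 2 ^ (2 ^ k - 1)
          < (2:ℝ) ^ 2 ^ k + 2 ^ (2 ^ k - 1) * ((k:ℝ) - 1) := by
        rw [hEr]; nlinarith [hTpos]
      push_cast
      nlinarith [hnth, c1, c2, c4, c5]
  have h2 : ¬ ((fun n : ℕ => (Nat.nth (· ∈ Cseq) (2 * n) : ℝ)) =O[atTop]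
      (fun n : ℕ => (Nat.nth (· ∈ Cseq) n : ℝ))) := by
    intro hO
    obtain ⟨C, _hC0, hC⟩ := hO.exists_nonneg
    have hb := hC.bound
    obtain ⟨n, hlt, hbound, hn1⟩ :=
      ((h3 C).and_eventually (hb.and (eventually_ge_atTop 1))).exists
    have hle : n ≤ Nat.nth (· ∈ Cseq) n :=
      Nat.le_nth (fun hf => absurd hf CseqAux.Cseq_infinite)
    have hpos : (0:ℝ) < (Nat.nth (· ∈ Cseq) n : ℝ) := by
      have h1 : 1 ≤ Nat.nth (· ∈ Cseq) n := le_trans hn1 hle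
      exact_mod_cast Nat.lt_of_lt_of_le Nat.zero_lt_one h1
    have hlt' : C * (Nat.nth (· ∈ Cseq) n : ℝ) < (Nat.nth (· ∈ Cseq) (2 * n) : ℝ) :=
      (lt_div_iff₀ hpos).mp hlt
    simp only [Real.norm_natCast] at hbound
    linarith
  exact ⟨CseqAux.part1, h2, h3⟩
end
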